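/- Let A : [0,1]² → ℝ be continuous and M = { probability measures ν on [0,1]² : ∫(f(x)−f(y))dν = 0 for all continuous f : [0,1] → ℝ }. Then sup_{ν ∈ M} ∫ A dν = inf_{f ∈ C([0,1])} max_{(x,y) ∈ [0,1]²} ( A(x,y) + f(x) − f(y) ). -/

import Mathlib

open MeasureTheory ENNReal unitInterval

namespace Stmt8Aux

/-- Integrability of continuous functions on the compact space `I × I`. -/
lemma contIntegrable (g : C(I × I, ℝ)) (μ : Measure (I × I)) [IsFiniteMeasure μ] :
    Integrable g μ :=
  g.continuous.integrable_of_hasCompactSupport (HasCompactSupport.of_compactSpace _)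

/-- Sum of `A - c` along the edges of a finite path. -/
noncomputable def pv (A : C(I × I, ℝ)) (c : ℝ) {m : ℕ} (q : Fin (m + 1) → I) : ℝ :=
  ∑ i : Fin m, (A (q i.castSucc, q i.succ) - c)

lemma pv_snoc (A : C(I × I, ℝ)) (c : ℝ) {m : ℕ} (q : Fin (m + 1) → I) (y : I) :
    pv A c (Fin.snoc q y) = pv A c q + (A (q (Fin.last m), y) - c) := by
  unfold pv
  rw [Fin.sum_univ_castSucc]
  congr 1
  · refine Finset.sum_congr rfl fun i _ => ?_
    rw [Fin.succ_castSucc, Fin.snoc_castSucc, Fin.snoc_castSucc]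
  · rw [Fin.succ_last, Fin.snoc_castSucc, Fin.snoc_last]

/-- The set of path sums ending at `y` (paths with at least one edge). -/
def P (A : C(I × I, ℝ)) (c : ℝ) (y : I) : Set ℝ :=
  {s | ∃ (m : ℕ) (q : Fin (m + 1) → I), s = pv A c (Fin.snoc q y)}

lemma P_nonempty (A : C(I × I, ℝ)) (c : ℝ) (y : I) : (P A c y).Nonempty :=
  ⟨pv A c (Fin.snoc (fun _ => y) y), 0, fun _ => y, rfl⟩

/-- Key assumption: no cycle has average above `c`. -/
def CycleBound (A : C(I × I, ℝ)) (c : ℝ) : Prop :=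
  ∀ (n : ℕ) (x : Fin (n + 1) → I), ∑ i : Fin (n + 1), (A (x i, x (i + 1)) : ℝ) ≤ (n + 1 : ℝ) * c

lemma pv_le (A : C(I × I, ℝ)) (c : ℝ) (hc : CycleBound A c) {m : ℕ}
    (q : Fin (m + 1) → I) (y : I) : pv A c (Fin.snoc q y) ≤ c + ‖A‖ := by
  set x : Fin (m + 2) → I := Fin.snoc q y with hx
  have hcyc := hc (m + 1) x
  rw [Fin.sum_univ_castSucc] at hcyc
  simp only [Fin.coeSucc_eq_succ, Fin.last_add_one] at hcyc
  have hpv : pv A c x = (∑ i : Fin (m + 1), A (x i.castSucc, x i.succ)) - ((m : ℝ) + 1) * c := by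
    unfold pv
    rw [Finset.sum_sub_distrib, Finset.sum_const, Finset.card_univ, Fintype.card_fin,
      nsmul_eq_mul]
    push_cast
    ring
  have hxl : x (Fin.last (m + 1)) = y := Fin.snoc_last _ _
  have hAbd : -‖A‖ ≤ A (y, x 0) := by
    have h := A.norm_coe_le_norm (y, x 0)
    rw [Real.norm_eq_abs] at h
    exact (abs_le.mp h).1
  rw [hxl] at hcyc
  push_cast at hcyc hpv ⊢
  linarith

lemma P_bddAbove (A : C(I × I, ℝ)) (c : ℝ) (hc : CycleBound A c) (y : I) :
    BddAbove (P A c y) := by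
  refine ⟨c + ‖A‖, ?_⟩
  rintro s ⟨m, q, rfl⟩
  exact pv_le A c hc q y

/-- The candidate potential. -/
noncomputable def pot (A : C(I × I, ℝ)) (c : ℝ) (y : I) : ℝ := sSup (P A c y)

lemma pot_ext (A : C(I × I, ℝ)) (c : ℝ) (hc : CycleBound A c) (y y' : I) :
    pot A c y + (A (y, y') - c) ≤ pot A c y' := by
  unfold pot
  have h : ∀ s ∈ P A c y, s ≤ sSup (P A c y') - (A (y, y') - c) := by
    rintro s ⟨m, q, rfl⟩
    have hmem : pv A c (Fin.snoc q y) + (A (y, y') - c) ∈ P A c y' := by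
      refine ⟨m + 1, Fin.snoc q y, ?_⟩
      rw [pv_snoc A c (Fin.snoc q y) y', Fin.snoc_last]
    have := le_csSup (P_bddAbove A c hc y') hmem
    linarith
  have := csSup_le (P_nonempty A c y) h
  linarith

lemma pot_dist_le (A : C(I × I, ℝ)) (c : ℝ) (hc : CycleBound A c) {ε δ : ℝ} (hδ : 0 < δ)
    (hAδ : ∀ p p' : I × I, dist p p' < δ → dist (A p) (A p') < ε)
    {u v : I} (huv : dist u v < δ) : pot A c u ≤ pot A c v + ε := by
  unfold pot
  refine csSup_le (P_nonempty A c u) ?_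
  rintro s ⟨m, q, rfl⟩
  have hle : pv A c q + (A (q (Fin.last m), v) - c) ≤ sSup (P A c v) := by
    refine le_csSup (P_bddAbove A c hc v) ?_
    rw [← pv_snoc]
    exact ⟨m, q, rfl⟩
  have hd : dist ((q (Fin.last m), u) : I × I) (q (Fin.last m), v) < δ := by
    rw [Prod.dist_eq]
    apply max_lt
    · simpa [dist_self] using hδ
    · exact huv
  have hA := hAδ _ _ hd
  rw [Real.dist_eq, abs_lt] at hA
  rw [pv_snoc]
  linarith [hA.1, hA.2]

lemma pot_continuous (A : C(I × I, ℝ)) (c : ℝ) (hc : CycleBound A c) :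
    Continuous (pot A c) := by
  rw [Metric.continuous_iff]
  intro y ε hε
  have hA : UniformContinuous A := CompactSpace.uniformContinuous_of_continuous A.continuous
  rw [Metric.uniformContinuous_iff] at hA
  obtain ⟨δ, hδ, hAδ⟩ := hA (ε / 2) (half_pos hε)
  refine ⟨δ, hδ, fun y' hy' => ?_⟩
  have h1 : pot A c y' ≤ pot A c y + ε / 2 :=
    pot_dist_le A c hc hδ (fun p p' h => hAδ h) hy'
  have h2 : pot A c y ≤ pot A c y' + ε / 2 :=
    pot_dist_le A c hc hδ (fun p p' h => hAδ h) (by rwa [dist_comm])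
  rw [Real.dist_eq, abs_lt]
  constructor <;> linarith

end Stmt8Aux

open Stmt8Aux

/-- Fenchel–Rockafellar duality:
sup_{ν ∈ M} ∫ A dν = inf_{f ∈ C([0,1])} max_{(x,y)} (A(x,y) + f(x) - f(y)),
where M is the set of probability measures on [0,1]² with equal marginals. -/
theorem stmt8 (A : C(I × I, ℝ)) :
    sSup {r : ℝ | ∃ ν : ProbabilityMeasure (I × I),
        (∀ f : C(I, ℝ), ∫ p, (f p.1 - f p.2) ∂(ν : Measure (I × I)) = 0) ∧
        r = ∫ p, A p ∂(ν : Measure (I × I))} =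
    sInf {r : ℝ | ∃ f : C(I, ℝ), r = ⨆ p : I × I, (A p + f p.1 - f p.2)} := by
  set L : Set ℝ := {r : ℝ | ∃ ν : ProbabilityMeasure (I × I),
      (∀ f : C(I, ℝ), ∫ p, (f p.1 - f p.2) ∂(ν : Measure (I × I)) = 0) ∧
      r = ∫ p, A p ∂(ν : Measure (I × I))} with hL
  set R : Set ℝ := {r : ℝ | ∃ f : C(I, ℝ), r = ⨆ p : I × I, (A p + f p.1 - f p.2)} with hR
  -- the easy direction: every element of L is ≤ every element of R
  have easy : ∀ (g : C(I, ℝ)) (ν : ProbabilityMeasure (I × I)),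
      (∀ f : C(I, ℝ), ∫ p, (f p.1 - f p.2) ∂(ν : Measure (I × I)) = 0) →
      ∫ p, A p ∂(ν : Measure (I × I)) ≤ ⨆ p : I × I, (A p + g p.1 - g p.2) := by
    intro g ν hν
    have hgc : Continuous fun p : I × I => A p + g p.1 - g p.2 :=
      (A.continuous.add (g.continuous.comp continuous_fst)).sub
        (g.continuous.comp continuous_snd)
    have hhc : Continuous fun p : I × I => g p.1 - g p.2 :=
      (g.continuous.comp continuous_fst).sub (g.continuous.comp continuous_snd)
    have hbdd : BddAbove (Set.range fun p : I × I => A p + g p.1 - g p.2) :=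
      (isCompact_range hgc).bddAbove
    have hiA : Integrable (fun p : I × I => A p) (ν : Measure (I × I)) :=
      contIntegrable A _
    have hiH : Integrable (fun p : I × I => g p.1 - g p.2) (ν : Measure (I × I)) :=
      contIntegrable ⟨_, hhc⟩ _
    have hiG : Integrable (fun p : I × I => A p + g p.1 - g p.2) (ν : Measure (I × I)) :=
      contIntegrable ⟨_, hgc⟩ _
    have key : ∫ p, (A p + g p.1 - g p.2) ∂(ν : Measure (I × I))
        = ∫ p, A p ∂(ν : Measure (I × I)) := by
      have heq : (fun p : I × I => A p + g p.1 - g p.2)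
          = fun p : I × I => A p + (g p.1 - g p.2) := by
        funext p; ring
      rw [heq, integral_add hiA hiH, hν g, add_zero]
    rw [← key]
    calc ∫ p, (A p + g p.1 - g p.2) ∂(ν : Measure (I × I))
        ≤ ∫ _, (⨆ p : I × I, (A p + g p.1 - g p.2)) ∂(ν : Measure (I × I)) :=
          integral_mono hiG (integrable_const _) fun p => le_ciSup hbdd p
      _ = ⨆ p : I × I, (A p + g p.1 - g p.2) := by simp
  -- L is nonempty (diagonal Dirac measure)
  have hLne : L.Nonempty := by
    have hd : ∀ f : C(I, ℝ), ∫ p, (f p.1 - f p.2) ∂(Measure.dirac ((0 : I), (0 : I))) = 0 := by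
      intro f
      rw [integral_dirac (fun p : I × I => f p.1 - f p.2) ((0 : I), (0 : I))]
      simp
    exact ⟨∫ p, A p ∂(Measure.dirac ((0 : I), (0 : I))),
      ⟨Measure.dirac ((0 : I), (0 : I)), inferInstance⟩, hd, rfl⟩
  -- R is nonempty
  have hRne : R.Nonempty := ⟨⨆ p : I × I, (A p + (0 : C(I, ℝ)) p.1 - (0 : C(I, ℝ)) p.2), 0, rfl⟩
  have hLR : ∀ r ∈ L, ∀ t ∈ R, r ≤ t := by
    rintro r ⟨ν, hν, rfl⟩ t ⟨g, rfl⟩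
    exact easy g ν hν
  obtain ⟨t₀, ht₀⟩ := hRne
  obtain ⟨r₀, hr₀⟩ := hLne
  have hLbdd : BddAbove L := ⟨t₀, fun r hr => hLR r hr t₀ ht₀⟩
  have hRbdd : BddBelow R := ⟨r₀, fun t ht => hLR r₀ hr₀ t ht⟩
  set c : ℝ := sSup L with hcdef
  -- cycle bound for c
  have hc : CycleBound A c := by
    intro n x
    set μ : Measure (I × I) :=
      (((n + 1 : ℕ) : ℝ≥0∞))⁻¹ • ∑ i : Fin (n + 1), Measure.dirac (x i, x (i + 1)) with hμ
    have hn1 : (((n + 1 : ℕ) : ℝ≥0∞)) ≠ 0 := by simp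
    have hn2 : (((n + 1 : ℕ) : ℝ≥0∞)) ≠ ⊤ := by simp
    have hprob : IsProbabilityMeasure μ := by
      constructor
      rw [hμ, Measure.smul_apply, Measure.finset_sum_apply]
      simp only [measure_univ, Finset.sum_const, Finset.card_univ, Fintype.card_fin,
        nsmul_eq_mul, mul_one, smul_eq_mul]
      exact ENNReal.inv_mul_cancel hn1 hn2
    haveI : IsFiniteMeasure μ := by haveI := hprob; infer_instance
    have hintg : ∀ (g : I × I → ℝ), Continuous g → ∫ p, g p ∂μ =
        ((n : ℝ) + 1)⁻¹ * ∑ i : Fin (n + 1), g (x i, x (i + 1)) := by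
      intro g hg
      rw [hμ, integral_smul_measure, integral_finset_sum_measure]
      · simp only [integral_dirac]
        rw [smul_eq_mul, ENNReal.toReal_inv]
        have h9 : (((n + 1 : ℕ) : ℝ≥0∞)).toReal = (n : ℝ) + 1 := by
          rw [ENNReal.toReal_natCast]
          push_cast
          ring
        rw [h9]
      · intro i _
        exact contIntegrable ⟨g, hg⟩ (Measure.dirac (x i, x (i + 1)))
    have hmarg : ∀ f : C(I, ℝ), ∫ p, (f p.1 - f p.2) ∂μ = 0 := by
      intro f
      rw [hintg (fun p : I × I => f p.1 - f p.2)
        ((f.continuous.comp continuous_fst).sub (f.continuous.comp continuous_snd))]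
      have htel : ∑ i : Fin (n + 1), (f (x i) - f (x (i + 1))) = 0 := by
        rw [Finset.sum_sub_distrib, sub_eq_zero]
        have := Equiv.sum_comp (Equiv.addRight (1 : Fin (n + 1))) fun j => f (x j)
        simpa using this.symm
      rw [htel, mul_zero]
    have hmem : (∫ p, A p ∂μ) ∈ L := ⟨⟨μ, hprob⟩, hmarg, rfl⟩
    have hlec : ∫ p, A p ∂μ ≤ c := le_csSup hLbdd hmem
    rw [hintg (fun p => A p) A.continuous] at hlec
    have hpos : (0 : ℝ) < (n : ℝ) + 1 := by positivity
    rw [inv_mul_le_iff₀ hpos] at hlec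
    calc ∑ i : Fin (n + 1), A (x i, x (i + 1)) ≤ ((n : ℝ) + 1) * c := hlec
      _ = ((n : ℕ) + 1 : ℝ) * c := by norm_num
  -- the potential as a continuous map
  set F : C(I, ℝ) := ⟨pot A c, pot_continuous A c hc⟩ with hF
  have hkey : ∀ p : I × I, A p + F p.1 - F p.2 ≤ c := by
    intro p
    have h2 : pot A c p.1 + (A p - c) ≤ pot A c p.2 := pot_ext A c hc p.1 p.2
    simp only [hF, ContinuousMap.coe_mk]
    linarith
  have htF : (⨆ p : I × I, (A p + F p.1 - F p.2)) ≤ c := ciSup_le hkey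
  refine le_antisymm ?_ ?_
  · exact le_csInf ⟨t₀, ht₀⟩ fun t ht => csSup_le ⟨r₀, hr₀⟩ fun r hr => hLR r hr t ht
  · calc sInf R ≤ ⨆ p : I × I, (A p + F p.1 - F p.2) := csInf_le hRbdd ⟨F, rfl⟩
      _ ≤ c := htF
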